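/- A regular hexagon with distance 1 between opposite sides can be partitioned into three congruent pentagons, each of diameter √3/2 (which is less than 1). -/

import Mathlib

open EuclideanGeometry Affine Metric

noncomputable section Hex8

abbrev E8 : Type := EuclideanSpace ℝ (Fin 2)

def pt8 (x y : ℝ) : E8 := (WithLp.equiv 2 (Fin 2 → ℝ)).symm ![x, y]

@[simp] lemma pt8_app0 (x y : ℝ) : pt8 x y 0 = x := rfl
@[simp] lemma pt8_app1 (x y : ℝ) : pt8 x y 1 = y := rfl

@[simp] lemma cons_val_five8 {α : Type*} (a b c d e f : α) : ![a,b,c,d,e,f] 5 = f := rfl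

def sq3 : ℝ := Real.sqrt 3

lemma sq3_sq : sq3 ^ 2 = 3 := Real.sq_sqrt (by norm_num)
lemma sq3_nonneg : 0 ≤ sq3 := Real.sqrt_nonneg 3

def vh : Fin 6 → E8 := ![pt8 (sq3/3) 0, pt8 (sq3/6) (1/2), pt8 (-(sq3/6)) (1/2),
  pt8 (-(sq3/3)) 0, pt8 (-(sq3/6)) (-(1/2)), pt8 (sq3/6) (-(1/2))]

@[simp] lemma vh0 : vh 0 = pt8 (sq3/3) 0 := rfl
@[simp] lemma vh1 : vh 1 = pt8 (sq3/6) (1/2) := rfl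
@[simp] lemma vh2 : vh 2 = pt8 (-(sq3/6)) (1/2) := rfl
@[simp] lemma vh3 : vh 3 = pt8 (-(sq3/3)) 0 := rfl
@[simp] lemma vh4 : vh 4 = pt8 (-(sq3/6)) (-(1/2)) := rfl
@[simp] lemma vh5 : vh 5 = pt8 (sq3/6) (-(1/2)) := rfl

def b1 : Fin 5 → E8 := ![pt8 0 0, pt8 (sq3/4) (1/4), pt8 (sq3/6) (1/2),
  pt8 (-(sq3/6)) (1/2), pt8 (-(sq3/4)) (1/4)]
def b2 : Fin 5 → E8 := ![pt8 0 0, pt8 (-(sq3/4)) (1/4), pt8 (-(sq3/3)) 0,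
  pt8 (-(sq3/6)) (-(1/2)), pt8 0 (-(1/2))]
def b3 : Fin 5 → E8 := ![pt8 0 0, pt8 0 (-(1/2)), pt8 (sq3/6) (-(1/2)),
  pt8 (sq3/3) 0, pt8 (sq3/4) (1/4)]

lemma mem_hull_of_w {n : ℕ} (v : Fin n → E8) (w : Fin n → ℝ) (x : E8)
    (h0 : ∀ i, 0 ≤ w i) (h1 : ∑ i, w i = 1) (hx : ∑ i, w i • v i = x) :
    x ∈ convexHull ℝ (Set.range v) :=
  mem_convexHull_of_exists_fintype w v h0 h1 (fun i => Set.mem_range_self i) hx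

lemma w_of_mem_hull {n : ℕ} (v : Fin n → E8) (x : E8)
    (hx : x ∈ convexHull ℝ (Set.range v)) :
    ∃ w : Fin n → ℝ, (∀ i, 0 ≤ w i) ∧ ∑ i, w i = 1 ∧ ∑ i, w i • v i = x := by
  rw [convexHull_range_eq_exists_affineCombination] at hx
  obtain ⟨s, w, h0, h1, hx⟩ := hx
  classical
  refine ⟨fun i => if i ∈ s then w i else 0, ?_, ?_, ?_⟩
  · intro i; dsimp only; split
    · exact h0 _ ‹_›
    · exact le_refl 0
  · simpa using h1
  · rw [← hx, s.affineCombination_eq_linear_combination v w h1]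
    rw [← Finset.sum_subset (Finset.subset_univ s)]
    · exact Finset.sum_congr rfl (fun i hi => by simp [hi])
    · intro i _ hi; simp [hi]

set_option linter.unnecessarySeqFocus false in
lemma cover : convexHull ℝ (Set.range vh) ⊆
    convexHull ℝ (Set.range b1) ∪ convexHull ℝ (Set.range b2) ∪ convexHull ℝ (Set.range b3) := by
  intro x hx
  obtain ⟨w, h0, h1, hxw⟩ := w_of_mem_hull vh x hx
  rw [Fin.sum_univ_six] at h1
  have key : x = (w 0 + w 1 - w 3 - w 4) • vh 0 + (w 1 + w 2 - w 4 - w 5) • vh 2 := by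
    rw [← hxw, Fin.sum_univ_six]
    ext i; fin_cases i <;> simp [pt8] <;> ring
  set p := w 0 + w 1 - w 3 - w 4 with hp
  set q := w 1 + w 2 - w 4 - w 5 with hq
  have n0 := h0 0; have n1 := h0 1; have n2 := h0 2
  have n3 := h0 3; have n4 := h0 4; have n5 := h0 5
  have hp1 : p ≤ 1 := by simp only [hp]; linarith
  have hq1 : q ≤ 1 := by simp only [hq]; linarith
  have hpm : -1 ≤ p := by simp only [hp]; linarith
  have hqm : -1 ≤ q := by simp only [hq]; linarith
  have hpq1 : p - q ≤ 1 := by simp only [hp, hq]; linarith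
  have hqp1 : q - p ≤ 1 := by simp only [hp, hq]; linarith
  clear_value p q
  rcases le_total 0 p with hp0 | hp0 <;> rcases le_total 0 q with hq0 | hq0
  · rcases le_total q p with hqp | hqp
    · rcases le_total (p - q) q with hab | hab
      · left; left
        refine mem_hull_of_w b1 ![1 - p, 2*(p-q), q - (p-q), 0, 0] x ?_ ?_ ?_
        · intro i; fin_cases i <;> simp <;> linarith
        · rw [Fin.sum_univ_five]; simp; try ring
        · rw [Fin.sum_univ_five, key]
          ext i; fin_cases i <;> simp [b1, pt8] <;> ring
      · right
        refine mem_hull_of_w b3 ![1 - p, 0, 0, (p-q) - q, 2*q] x ?_ ?_ ?_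
        · intro i; fin_cases i <;> simp <;> linarith
        · rw [Fin.sum_univ_five]; simp; try ring
        · rw [Fin.sum_univ_five, key]
          ext i; fin_cases i <;> simp [b3, pt8] <;> ring
    · left; left
      refine mem_hull_of_w b1 ![1 - q, 0, p, q - p, 0] x ?_ ?_ ?_
      · intro i; fin_cases i <;> simp <;> linarith
      · rw [Fin.sum_univ_five]; simp; try ring
      · rw [Fin.sum_univ_five, key]
        ext i; fin_cases i <;> simp [b1, pt8] <;> ring
  · right
    refine mem_hull_of_w b3 ![1 - (p - q), 0, -q, p, 0] x ?_ ?_ ?_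
    · intro i; fin_cases i <;> simp <;> linarith
    · rw [Fin.sum_univ_five]; simp; try ring
    · rw [Fin.sum_univ_five, key]
      ext i; fin_cases i <;> simp [b3, pt8] <;> ring
  · rcases le_total (-p) q with hca | hca
    · left; left
      refine mem_hull_of_w b1 ![1 - (q - p), 0, 0, q - (-p), 2*(-p)] x ?_ ?_ ?_
      · intro i; fin_cases i <;> simp <;> linarith
      · rw [Fin.sum_univ_five]; simp; try ring
      · rw [Fin.sum_univ_five, key]
        ext i; fin_cases i <;> simp [b1, pt8] <;> ring
    · left; right
      refine mem_hull_of_w b2 ![1 - (q - p), 2*q, (-p) - q, 0, 0] x ?_ ?_ ?_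
      · intro i; fin_cases i <;> simp <;> linarith
      · rw [Fin.sum_univ_five]; simp; try ring
      · rw [Fin.sum_univ_five, key]
        ext i; fin_cases i <;> simp [b2, pt8] <;> ring
  · rcases le_total p q with hpq | hpq
    · left; right
      refine mem_hull_of_w b2 ![1 + p, 0, q - p, -q, 0] x ?_ ?_ ?_
      · intro i; fin_cases i <;> simp <;> linarith
      · rw [Fin.sum_univ_five]; simp; try ring
      · rw [Fin.sum_univ_five, key]
        ext i; fin_cases i <;> simp [b2, pt8] <;> ring
    · rcases le_total (p - q) (-p) with hca | hca
      · left; right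
        refine mem_hull_of_w b2 ![1 + q, 0, 0, (-p) - (p - q), 2*(p-q)] x ?_ ?_ ?_
        · intro i; fin_cases i <;> simp <;> linarith
        · rw [Fin.sum_univ_five]; simp; try ring
        · rw [Fin.sum_univ_five, key]
          ext i; fin_cases i <;> simp [b2, pt8] <;> ring
      · right
        refine mem_hull_of_w b3 ![1 + q, 2*(-p), (p - q) - (-p), 0, 0] x ?_ ?_ ?_
        · intro i; fin_cases i <;> simp <;> linarith
        · rw [Fin.sum_univ_five]; simp; try ring
        · rw [Fin.sum_univ_five, key]
          ext i; fin_cases i <;> simp [b3, pt8] <;> ring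

lemma o_mem : pt8 0 0 ∈ convexHull ℝ (Set.range vh) := by
  refine mem_hull_of_w vh ![1/2, 0, 0, 1/2, 0, 0] _ ?_ ?_ ?_
  · intro i; fin_cases i <;> norm_num
  · rw [Fin.sum_univ_six]; change (1/2:ℝ) + 0 + 0 + 1/2 + 0 + 0 = 1; norm_num
  · rw [Fin.sum_univ_six]; ext i; fin_cases i <;> simp [pt8] <;> ring

lemma m0_mem : pt8 (sq3/4) (1/4) ∈ convexHull ℝ (Set.range vh) := by
  refine mem_hull_of_w vh ![1/2, 1/2, 0, 0, 0, 0] _ ?_ ?_ ?_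
  · intro i; fin_cases i <;> norm_num
  · rw [Fin.sum_univ_six]; change (1/2:ℝ) + 1/2 + 0 + 0 + 0 + 0 = 1; norm_num
  · rw [Fin.sum_univ_six]; ext i; fin_cases i <;> simp [pt8] <;> ring

lemma m2_mem : pt8 (-(sq3/4)) (1/4) ∈ convexHull ℝ (Set.range vh) := by
  refine mem_hull_of_w vh ![0, 0, 1/2, 1/2, 0, 0] _ ?_ ?_ ?_
  · intro i; fin_cases i <;> norm_num
  · rw [Fin.sum_univ_six]; change (0:ℝ) + 0 + 1/2 + 1/2 + 0 + 0 = 1; norm_num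
  · rw [Fin.sum_univ_six]; ext i; fin_cases i <;> simp [pt8] <;> ring

lemma m4_mem : pt8 0 (-(1/2)) ∈ convexHull ℝ (Set.range vh) := by
  refine mem_hull_of_w vh ![0, 0, 0, 0, 1/2, 1/2] _ ?_ ?_ ?_
  · intro i; fin_cases i <;> norm_num
  · rw [Fin.sum_univ_six]; change (0:ℝ) + 0 + 0 + 0 + 1/2 + 1/2 = 1; norm_num
  · rw [Fin.sum_univ_six]; ext i; fin_cases i <;> simp [pt8] <;> ring

lemma vmem (i : Fin 6) : vh i ∈ convexHull ℝ (Set.range vh) :=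
  subset_convexHull ℝ _ ⟨i, rfl⟩

lemma b1_sub : convexHull ℝ (Set.range b1) ⊆ convexHull ℝ (Set.range vh) := by
  refine convexHull_min ?_ (convex_convexHull ℝ _)
  rw [Set.range_subset_iff]
  intro j; fin_cases j
  · exact o_mem
  · exact m0_mem
  · exact vmem 1
  · exact vmem 2
  · exact m2_mem

lemma b2_sub : convexHull ℝ (Set.range b2) ⊆ convexHull ℝ (Set.range vh) := by
  refine convexHull_min ?_ (convex_convexHull ℝ _)
  rw [Set.range_subset_iff]
  intro j; fin_cases j
  · exact o_mem
  · exact m2_mem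
  · exact vmem 3
  · exact vmem 4
  · exact m4_mem

lemma b3_sub : convexHull ℝ (Set.range b3) ⊆ convexHull ℝ (Set.range vh) := by
  refine convexHull_min ?_ (convex_convexHull ℝ _)
  rw [Set.range_subset_iff]
  intro j; fin_cases j
  · exact o_mem
  · exact m4_mem
  · exact vmem 5
  · exact vmem 0
  · exact m0_mem

lemma hexeq : convexHull ℝ (Set.range vh) =
    convexHull ℝ (Set.range b1) ∪ convexHull ℝ (Set.range b2) ∪ convexHull ℝ (Set.range b3) :=
  subset_antisymm cover (by
    refine Set.union_subset (Set.union_subset b1_sub b2_sub) b3_sub)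

/-! distances -/

lemma dist_pt8 (x y a b : ℝ) : dist (pt8 x y) (pt8 a b) = Real.sqrt ((x-a)^2+(y-b)^2) := by
  rw [EuclideanSpace.dist_eq]
  congr 1
  rw [Fin.sum_univ_two]
  simp [pt8, Real.dist_eq, sq_abs]

lemma dist_pt8_le (x y a b r : ℝ) (h : (x-a)^2 + (y-b)^2 ≤ r^2) (hr : 0 ≤ r) :
    dist (pt8 x y) (pt8 a b) ≤ r := by
  rw [dist_pt8]
  calc Real.sqrt ((x-a)^2+(y-b)^2) ≤ Real.sqrt (r^2) := Real.sqrt_le_sqrt h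
  _ = r := Real.sqrt_sq hr

lemma sq3_half : Real.sqrt 3 / 2 = sq3 / 2 := rfl

lemma diam_b1 : Metric.diam (convexHull ℝ (Set.range b1)) = Real.sqrt 3 / 2 := by
  rw [convexHull_diam, sq3_half]
  have h3 := sq3_sq
  have hn := sq3_nonneg
  apply le_antisymm
  · apply Metric.diam_le_of_forall_dist_le (by positivity)
    rintro x ⟨i, rfl⟩ y ⟨j, rfl⟩
    fin_cases i <;> fin_cases j <;>
      exact dist_pt8_le _ _ _ _ _ (by nlinarith) (by positivity)
  · have hb : Bornology.IsBounded (Set.range b1) := (Set.finite_range b1).isBounded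
    have := Metric.dist_le_diam_of_mem hb ⟨1, rfl⟩ ⟨4, rfl⟩
    have hd : dist (b1 1) (b1 4) = sq3 / 2 := by
      show dist (pt8 (sq3/4) (1/4)) (pt8 (-(sq3/4)) (1/4)) = sq3 / 2
      rw [dist_pt8]
      rw [show (sq3/4 - -(sq3/4))^2 + ((1:ℝ)/4 - 1/4)^2 = (sq3/2)^2 by ring]
      exact Real.sqrt_sq (by positivity)
    linarith [this, hd.symm.le, hd.le]

/-! rotation -/

def rotC (c s : ℝ) : E8 → E8 := fun x => pt8 (c * x 0 - s * x 1) (s * x 0 + c * x 1)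

lemma rotC_linear (c s : ℝ) : IsLinearMap ℝ (rotC c s) := by
  constructor <;> intros <;> ext i <;> fin_cases i <;>
    simp [rotC, pt8, mul_comm] <;> ring

def rotIso (c s : ℝ) (h : c^2 + s^2 = 1) : E8 ≃ᵢ E8 where
  toEquiv :=
  { toFun := rotC c s
    invFun := rotC c (-s)
    left_inv := by
      intro x; ext i; fin_cases i <;> simp [rotC] <;>
        first
          | linear_combination (x 0) * h
          | linear_combination (x 1) * h
    right_inv := by
      intro x; ext i; fin_cases i <;> simp [rotC] <;>
        first
          | linear_combination (x 0) * h
          | linear_combination (x 1) * h }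
  isometry_toFun := by
    apply Isometry.of_dist_eq
    intro x y
    have hx : ∀ z : E8, z = pt8 (z 0) (z 1) := by
      intro z; ext i; fin_cases i <;> rfl
    rw [hx x, hx y]
    simp only [rotC, pt8_app0, pt8_app1]
    rw [dist_pt8, dist_pt8]
    congr 1
    linear_combination ((x 0 - y 0)^2 + (x 1 - y 1)^2) * h

/-! translation -/

def trIso (t : E8) : E8 ≃ᵢ E8 :=
  { toEquiv := Equiv.addLeft t
    isometry_toFun := Isometry.of_dist_eq (fun x y => by
      simp [Equiv.addLeft, dist_add_left]) }

lemma trIso_apply (t x : E8) : trIso t x = t + x := rfl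

lemma img_hull_tr (t : E8) {n : ℕ} (u : Fin n → E8) :
    (fun x => t + x) '' convexHull ℝ (Set.range u) =
      convexHull ℝ (Set.range fun j => t + u j) := by
  have : (fun x : E8 => t + x) = ⇑((AffineEquiv.constVAdd ℝ E8 t).toAffineMap) := by
    funext x; simp [AffineEquiv.constVAdd]; rfl
  rw [this, AffineMap.image_convexHull, ← Set.range_comp]
  rfl

lemma img_hull_lin {f : E8 → E8} (hf : IsLinearMap ℝ f) {n : ℕ} (u : Fin n → E8) :
    f '' convexHull ℝ (Set.range u) = convexHull ℝ (Set.range fun j => f (u j)) := by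
  rw [hf.image_convexHull, ← Set.range_comp]
  rfl

lemma rot1_b1 : (fun j => rotC (-(1/2)) (sq3/2) (b1 j)) = b2 := by
  have h3 := sq3_sq
  funext j
  fin_cases j <;> (ext i; fin_cases i) <;> simp [rotC, b1, b2, pt8] <;> nlinarith [h3]

lemma rot2_b1 : (fun j => rotC (-(1/2)) (-(sq3/2)) (b1 j)) = b3 := by
  have h3 := sq3_sq
  funext j
  fin_cases j <;> (ext i; fin_cases i) <;> simp [rotC, b1, b3, pt8] <;> nlinarith [h3]

lemma hullb2_eq : convexHull ℝ (Set.range b2) =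
    rotC (-(1/2)) (sq3/2) '' convexHull ℝ (Set.range b1) := by
  rw [img_hull_lin (rotC_linear _ _), rot1_b1]

lemma hullb3_eq : convexHull ℝ (Set.range b3) =
    rotC (-(1/2)) (-(sq3/2)) '' convexHull ℝ (Set.range b1) := by
  rw [img_hull_lin (rotC_linear _ _), rot2_b1]

lemma rot_h : ((-(1/2)) : ℝ)^2 + (sq3/2)^2 = 1 := by
  have := sq3_sq; nlinarith

lemma rot_h' : ((-(1/2)) : ℝ)^2 + (-(sq3/2))^2 = 1 := by
  have := sq3_sq; nlinarith

lemma diam_b2 : Metric.diam (convexHull ℝ (Set.range b2)) = Real.sqrt 3 / 2 := by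
  rw [hullb2_eq]
  rw [show rotC (-(1/2)) (sq3/2) = ⇑(rotIso _ _ rot_h) from rfl]
  rw [(rotIso _ _ rot_h).diam_image, diam_b1]

lemma diam_b3 : Metric.diam (convexHull ℝ (Set.range b3)) = Real.sqrt 3 / 2 := by
  rw [hullb3_eq]
  rw [show rotC (-(1/2)) (-(sq3/2)) = ⇑(rotIso _ _ rot_h') from rfl]
  rw [(rotIso _ _ rot_h').diam_image, diam_b1]

end Hex8

theorem stmt8 (V : Fin 6 → EuclideanSpace ℝ (Fin 2)) (O : EuclideanSpace ℝ (Fin 2))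
    (hreg : ∀ i : Fin 6, V i = O + (WithLp.equiv 2 (Fin 2 → ℝ)).symm
      ![(1 / Real.sqrt 3) * Real.cos (i * (Real.pi / 3)),
        (1 / Real.sqrt 3) * Real.sin (i * (Real.pi / 3))]) :
    ∃ P₁ P₂ P₃ : Set (EuclideanSpace ℝ (Fin 2)),
      (∃ q₁ q₂ q₃ : Fin 5 → EuclideanSpace ℝ (Fin 2),
        P₁ = convexHull ℝ (Set.range q₁) ∧ P₂ = convexHull ℝ (Set.range q₂) ∧
        P₃ = convexHull ℝ (Set.range q₃)) ∧
      convexHull ℝ (Set.range V) = P₁ ∪ P₂ ∪ P₃ ∧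
      (∃ f g : EuclideanSpace ℝ (Fin 2) ≃ᵢ EuclideanSpace ℝ (Fin 2), f '' P₁ = P₂ ∧ g '' P₁ = P₃) ∧
      Metric.diam P₁ = Real.sqrt 3 / 2 ∧ Metric.diam P₂ = Real.sqrt 3 / 2 ∧
      Metric.diam P₃ = Real.sqrt 3 / 2 ∧ Real.sqrt 3 / 2 < 1 := by
  have hs3 : Real.sqrt 3 * Real.sqrt 3 = 3 := Real.mul_self_sqrt (by norm_num)
  have hs3ne : Real.sqrt 3 ≠ 0 := by positivity
  -- identify V with the translated standard hexagon
  have hV : V = fun i => O + vh i := by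
    funext i
    rw [hreg i]
    congr 1
    fin_cases i <;> ext k <;> fin_cases k <;>
      · simp only [vh, pt8, sq3, Matrix.cons_val_zero, Matrix.cons_val_one, Matrix.head_cons,
          Matrix.cons_val_two, Matrix.cons_val_three, Matrix.cons_val_four, Matrix.tail_cons,
          WithLp.equiv_symm_apply, PiLp.toLp_apply, Fin.isValue]
        norm_num
        try simp only [show (3:ℝ)*(Real.pi/3) = Real.pi from by ring, Real.cos_pi, Real.sin_pi]
        try simp only [show (2:ℝ)*(Real.pi/3) = Real.pi - Real.pi/3 from by ring,
          show (4:ℝ)*(Real.pi/3) = Real.pi - (-(Real.pi/3)) from by ring,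
          show (5:ℝ)*(Real.pi/3) = 2*Real.pi - Real.pi/3 from by ring,
          Real.cos_pi_sub, Real.sin_pi_sub, Real.cos_two_pi_sub, Real.sin_two_pi_sub,
          Real.cos_neg, Real.sin_neg, Real.cos_pi, Real.sin_pi,
          Real.cos_pi_div_three, Real.sin_pi_div_three]
        try field_simp
        try nlinarith [hs3]
  refine ⟨(fun x => O + x) '' convexHull ℝ (Set.range b1),
          (fun x => O + x) '' convexHull ℝ (Set.range b2),
          (fun x => O + x) '' convexHull ℝ (Set.range b3), ?_, ?_, ?_, ?_, ?_, ?_, ?_⟩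
  · exact ⟨fun j => O + b1 j, fun j => O + b2 j, fun j => O + b3 j,
      img_hull_tr O b1, img_hull_tr O b2, img_hull_tr O b3⟩
  · rw [hV, ← img_hull_tr O vh, hexeq, Set.image_union, Set.image_union]
  · -- isometries
    have hiso : ∀ (c s : ℝ) (h : c^2+s^2=1) (bb : Fin 5 → E8),
        (fun j => rotC c s (b1 j)) = bb →
        ((trIso O).symm.trans ((rotIso c s h).trans (trIso O))) ''
            ((fun x => O + x) '' convexHull ℝ (Set.range b1)) =
          (fun x => O + x) '' convexHull ℝ (Set.range bb) := by
      intro c s h bb hbb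
      rw [← Set.image_comp]
      have hcomp : (⇑((trIso O).symm.trans ((rotIso c s h).trans (trIso O))) ∘ fun x => O + x)
          = (fun x => O + x) ∘ rotC c s := by
        funext x
        simp only [Function.comp_apply, IsometryEquiv.trans_apply]
        have h1 : (trIso O).symm (O + x) = x := by
          apply (trIso O).injective
          simp only [IsometryEquiv.apply_symm_apply]
          rfl
        rw [h1]
        rfl
      rw [hcomp, Set.image_comp, img_hull_lin (rotC_linear c s) b1, hbb]
    exact ⟨_, _, hiso _ _ rot_h b2 rot1_b1, hiso _ _ rot_h' b3 rot2_b1⟩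
  · rw [show (fun x : E8 => O + x) = ⇑(trIso O) from rfl,
      (trIso O).diam_image, diam_b1]
  · rw [show (fun x : E8 => O + x) = ⇑(trIso O) from rfl,
      (trIso O).diam_image, diam_b2]
  · rw [show (fun x : E8 => O + x) = ⇑(trIso O) from rfl,
      (trIso O).diam_image, diam_b3]
  · have : Real.sqrt 3 < 2 := by nlinarith [hs3, Real.sqrt_nonneg 3]
    linarith
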